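/- arXiv:2109.12867 — 6 statements merged into one kernel-verified Lean document; each statement's English description precedes it below -/
import Mathlib

section
/- Let p be a prime, e a positive integer, and f ∈ ℤ[x] a polynomial of degree k. Let (b_i)_{i≥0} be a p-ordering of a subset S ⊆ ℤ. Then p^e divides f(b_i) for all 0 ≤ i ≤ k if and only if p^e divides f(b) for all b ∈ S. -/
open Polynomial Finset

/-- `p`-adic valuation on ℤ, valued in `ℕ∞` with `vp p 0 = ⊤`. -/
noncomputable def vp (p : ℕ) (x : ℤ) : ℕ∞ :=
  if x = 0 then ⊤ else (padicValInt p x : ℕ∞)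

/-- `u` is a `p`-ordering of `S ⊆ ℤ`. -/
def IsPOrdering (p : ℕ) (S : Set ℤ) (u : ℕ → ℤ) : Prop :=
  (∀ i, u i ∈ S) ∧
  ∀ m, 0 < m → ∀ a ∈ S,
    vp p (∏ i ∈ Finset.range m, (u m - u i)) ≤ vp p (∏ i ∈ Finset.range m, (a - u i))

/-- `e p m` is the exponent of `p` in the Bhargava factorial `m!_S`. -/
def IsFactExp (S : Set ℤ) (e : ℕ → ℕ → ℕ) : Prop :=
  ∀ p : ℕ, p.Prime → ∀ u : ℕ → ℤ, IsPOrdering p S u →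
    ∀ m, (e p m : ℕ∞) = vp p (∏ i ∈ Finset.range m, (u m - u i))

/-- `x 0, …, x k` is a `d_k`-ordering of `S`, where `e` records the exponents of the
Bhargava factorials of `S`. -/
def IsDkOrdering (S : Set ℤ) (d : ℤ) (k : ℕ) (e : ℕ → ℕ → ℕ) (x : ℕ → ℤ) : Prop :=
  ∀ p : ℕ, p.Prime → (p : ℤ) ∣ d →
    ∃ u : ℕ → ℤ, IsPOrdering p S u ∧ ∀ i ≤ k, (p : ℤ) ^ (e p k + 1) ∣ (x i - u i)

/-- `f ∈ Int(S,ℤ)`, i.e. `f` maps `S` into `ℤ`. -/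
def IsIntValued (S : Set ℤ) (f : Polynomial ℚ) : Prop :=
  ∀ a ∈ S, ∃ n : ℤ, f.eval (a : ℚ) = (n : ℚ)

/-- The ring `Int(S,ℤ)` of integer-valued polynomials on `S`, as a subring of `ℚ[X]`. -/
noncomputable def IntPoly (S : Set ℤ) : Subring (Polynomial ℚ) where
  carrier := {f | ∀ a ∈ S, ∃ n : ℤ, f.eval (a : ℚ) = (n : ℚ)}
  mul_mem' := by
    rintro f g hf hg
    intro a ha
    obtain ⟨n, hn⟩ := hf a ha
    obtain ⟨m, hm⟩ := hg a ha
    exact ⟨n * m, by simp [hn, hm]⟩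
  one_mem' := fun a _ => ⟨1, by simp⟩
  add_mem' := by
    rintro f g hf hg
    intro a ha
    obtain ⟨n, hn⟩ := hf a ha
    obtain ⟨m, hm⟩ := hg a ha
    exact ⟨n + m, by simp [hn, hm]⟩
  zero_mem' := fun a _ => ⟨0, by simp⟩
  neg_mem' := by
    rintro f hf a ha
    obtain ⟨n, hn⟩ := hf a ha
    exact ⟨-n, by simp [hn]⟩

/-- `f` is image primitive over `S`: no prime divides `f(a)` for all `a ∈ S`. -/
def IsImagePrimitive (S : Set ℤ) (f : Polynomial ℚ) : Prop :=
  ∀ p : ℕ, p.Prime → ∃ a ∈ S, ∀ n : ℤ, f.eval (a : ℚ) ≠ (p : ℚ) * (n : ℚ)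

/-- `m` is the fixed divisor `d(S,f)` of `f ∈ ℤ[X]` over `S` (gcd of values, up to sign). -/
def IsFixedDivisor (S : Set ℤ) (f : Polynomial ℤ) (m : ℤ) : Prop :=
  (∀ b ∈ S, m ∣ f.eval b) ∧ ∀ n : ℤ, (∀ b ∈ S, n ∣ f.eval b) → n ∣ m

/-- Transfer divisibility along a `vp` inequality. -/
lemma dvd_mul_of_vp_le {p : ℕ} (hp : p.Prime) {A B c : ℤ} (h : vp p A ≤ vp p B)
    {e : ℕ} (hd : (p : ℤ) ^ e ∣ c * A) : (p : ℤ) ^ e ∣ c * B := by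
  haveI : Fact p.Prime := ⟨hp⟩
  by_cases hc : c = 0
  · simp [hc]
  by_cases hB : B = 0
  · simp [hB]
  by_cases hA : A = 0
  · simp [vp, hA, hB] at h
  have hA' : vp p A = (padicValInt p A : ℕ∞) := by simp [vp, hA]
  have hB' : vp p B = (padicValInt p B : ℕ∞) := by simp [vp, hB]
  rw [hA', hB', Nat.cast_le] at h
  have hCA : c * A ≠ 0 := mul_ne_zero hc hA
  have he : e ≤ padicValInt p (c * A) := by
    rcases (padicValInt_dvd_iff e (c * A)).mp hd with h0 | h0
    · exact absurd h0 hCA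
    · exact h0
  rw [padicValInt.mul hc hA] at he
  rw [padicValInt_dvd_iff]
  right
  rw [padicValInt.mul hc hB]
  omega

/-- Expansion of a polynomial in the basis `∏_{j<i} (X - b j)`. -/
lemma basis_expansion (b : ℕ → ℤ) :
    ∀ k : ℕ, ∀ f : Polynomial ℤ, f.natDegree ≤ k →
      ∃ c : ℕ → ℤ, ∀ x : ℤ,
        f.eval x = ∑ i ∈ Finset.range (k + 1), c i * ∏ j ∈ Finset.range i, (x - b j) := by
  intro k
  induction k with
  | zero =>
    intro f hf
    refine ⟨fun _ => f.coeff 0, fun x => ?_⟩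
    rw [Polynomial.eq_C_of_natDegree_le_zero hf]
    simp
  | succ k ih =>
    intro f hf
    set B : Polynomial ℤ := ∏ j ∈ Finset.range (k + 1), (Polynomial.X - Polynomial.C (b j)) with hBdef
    have hB : B.Monic := monic_prod_of_monic _ _ fun j _ => Polynomial.monic_X_sub_C (b j)
    have hBdeg : B.natDegree = k + 1 := by
      rw [hBdef, Polynomial.natDegree_prod _ _ fun j _ => Polynomial.X_sub_C_ne_zero (b j)]
      simp only [Polynomial.natDegree_X_sub_C, Finset.sum_const, smul_eq_mul,
        mul_one, Finset.card_range]
    have hr : (f %ₘ B).natDegree ≤ k := by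
      by_cases h0 : f %ₘ B = 0
      · simp [h0]
      · have := Polynomial.degree_modByMonic_lt f hB
        rw [Polynomial.degree_eq_natDegree hB.ne_zero, hBdeg] at this
        have := (Polynomial.natDegree_lt_iff_degree_lt h0).mpr this
        omega
    have hq : (f /ₘ B).natDegree = 0 := by
      rw [Polynomial.natDegree_divByMonic f hB, hBdeg]
      omega
    obtain ⟨c, hc⟩ := ih (f %ₘ B) hr
    refine ⟨fun i => if i = k + 1 then (f /ₘ B).coeff 0 else c i, fun x => ?_⟩
    have hfeq : f.eval x = (f %ₘ B).eval x + B.eval x * (f /ₘ B).coeff 0 := by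
      conv_lhs => rw [← Polynomial.modByMonic_add_div f B]
      rw [Polynomial.eq_C_of_natDegree_le_zero hq.le]
      simp [mul_comm]
    have hBev : B.eval x = ∏ j ∈ Finset.range (k + 1), (x - b j) := by
      rw [hBdef, Polynomial.eval_prod]
      simp
    have hsum : ∑ i ∈ Finset.range (k + 1 + 1),
        (if i = k + 1 then (f /ₘ B).coeff 0 else c i) * ∏ j ∈ Finset.range i, (x - b j)
        = (∑ i ∈ Finset.range (k + 1), c i * ∏ j ∈ Finset.range i, (x - b j))
          + (f /ₘ B).coeff 0 * ∏ j ∈ Finset.range (k + 1), (x - b j) := by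
      rw [Finset.sum_range_succ, if_pos rfl]
      congr 1
      refine Finset.sum_congr rfl fun i hi => ?_
      rw [Finset.mem_range] at hi
      rw [if_neg (by omega)]
    rw [hfeq, hc x, hBev, hsum]
    ring

/-- For a `p`-ordering `b` of `S` and `f ∈ ℤ[X]` of degree `k`,
`p^e ∣ f(b i)` for all `0 ≤ i ≤ k` iff `p^e ∣ f(b)` for all `b ∈ S`. -/
theorem stmt0 (p : ℕ) (hp : p.Prime) (e : ℕ) (he : 0 < e) (S : Set ℤ)
    (f : Polynomial ℤ) (k : ℕ) (hdeg : f.natDegree = k)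
    (b : ℕ → ℤ) (hb : IsPOrdering p S b) :
    (∀ i ≤ k, (p : ℤ) ^ e ∣ f.eval (b i)) ↔ (∀ x ∈ S, (p : ℤ) ^ e ∣ f.eval x) := by
  constructor
  · intro h x hx
    obtain ⟨c, hc⟩ := basis_expansion b k f (le_of_eq hdeg)
    have key : ∀ m, m ≤ k → (p : ℤ) ^ e ∣ c m * ∏ j ∈ Finset.range m, (b m - b j) := by
      intro m
      induction m using Nat.strong_induction_on with
      | _ m ihm =>
        intro hm
        have hev := hc (b m)
        have hsplit : f.eval (b m)
            = ∑ i ∈ Finset.range (m + 1), c i * ∏ j ∈ Finset.range i, (b m - b j) := by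
          rw [hev]
          refine (Finset.sum_subset (Finset.range_subset_range.mpr (by omega)) ?_).symm
          intro i hik hinot
          rw [Finset.mem_range] at hik hinot
          have : ∏ j ∈ Finset.range i, (b m - b j) = 0 :=
            Finset.prod_eq_zero (Finset.mem_range.mpr (by omega)) (sub_self _)
          simp [this]
        rw [Finset.sum_range_succ] at hsplit
        have hrest : (p : ℤ) ^ e ∣ ∑ i ∈ Finset.range m, c i * ∏ j ∈ Finset.range i, (b m - b j) := by
          apply Finset.dvd_sum
          intro i hi
          rw [Finset.mem_range] at hi
          have hdi := ihm i hi (by omega)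
          rcases Nat.eq_zero_or_pos i with hi0 | hi0
          · subst hi0; simpa using hdi
          · exact dvd_mul_of_vp_le hp (hb.2 i hi0 (b m) (hb.1 m)) hdi
        exact (dvd_add_right hrest).mp (hsplit ▸ h m hm)
    rw [hc x]
    apply Finset.dvd_sum
    intro i hi
    rw [Finset.mem_range] at hi
    rcases Nat.eq_zero_or_pos i with hi0 | hi0
    · subst hi0; simpa using key 0 (by omega)
    · exact dvd_mul_of_vp_le hp (hb.2 i hi0 x hx) (key i (by omega))
  · intro h i _
    exact h (b i) (hb.1 i)
end

section
/- Let S ⊆ ℤ, p a prime, (b_i)_{i≥0} a p-ordering of S, and f ∈ ℤ[x] of degree k. Write f = Σ_{i=0}^k c_i (x - b_0)(x - b_1)···(x - b_{i-1}) in the generalized falling factorial basis determined by the p-ordering. If p^e divides f(b_i) for all 0 ≤ i ≤ k, then p^e divides c_i · (b_i - b_0)(b_i - b_1)···(b_i - b_{i-1}) for all 0 ≤ i ≤ k. -/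
open Polynomial Finset

private lemma vp_key (p : ℕ) (hp : p.Prime) (e : ℕ) (c A B : ℤ)
    (hAB : vp p A ≤ vp p B) (h : (p : ℤ) ^ e ∣ c * A) : (p : ℤ) ^ e ∣ c * B := by
  haveI : Fact p.Prime := ⟨hp⟩
  rcases eq_or_ne B 0 with hB | hB
  · simp [hB]
  rcases eq_or_ne c 0 with hc | hc
  · simp [hc]
  have hA : A ≠ 0 := by
    rintro rfl
    rw [show vp p 0 = ⊤ from if_pos rfl, vp, if_neg hB, top_le_iff] at hAB
    exact (WithTop.natCast_ne_top _) hAB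
  rw [vp, if_neg hA, vp, if_neg hB, Nat.cast_le] at hAB
  rw [padicValInt_dvd_iff] at h ⊢
  rcases h with h | h
  · exact absurd h (mul_ne_zero hc hA)
  right
  rw [padicValInt.mul hc hA] at h
  rw [padicValInt.mul hc hB]
  omega

/-- writing `f = Σ c_i ∏_{j<i}(X - b_j)` along a `p`-ordering `b` of `S`,
if `p^e ∣ f(b i)` for all `i ≤ k` then `p^e ∣ c_i·∏_{j<i}(b_i - b_j)` for all `i ≤ k`. -/
theorem stmt1 (p : ℕ) (hp : p.Prime) (e : ℕ) (S : Set ℤ)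
    (b : ℕ → ℤ) (hb : IsPOrdering p S b)
    (f : Polynomial ℤ) (k : ℕ) (hdeg : f.natDegree = k) (c : ℕ → ℤ)
    (hrep : f = ∑ i ∈ Finset.range (k + 1),
      Polynomial.C (c i) * ∏ j ∈ Finset.range i, (Polynomial.X - Polynomial.C (b j)))
    (hdvd : ∀ i ≤ k, (p : ℤ) ^ e ∣ f.eval (b i)) :
    ∀ i ≤ k, (p : ℤ) ^ e ∣ c i * ∏ j ∈ Finset.range i, (b i - b j) := by
  have heval : ∀ i ≤ k, f.eval (b i) =
      ∑ m ∈ Finset.range (i + 1), c m * ∏ j ∈ Finset.range m, (b i - b j) := by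
    intro i hik
    rw [hrep]
    simp only [eval_finset_sum, eval_mul, eval_C, eval_prod, eval_sub, eval_X]
    refine (Finset.sum_subset (Finset.range_subset_range.mpr (by omega)) ?_).symm
    intro m hm hm'
    simp only [Finset.mem_range] at hm hm'
    have : i ∈ Finset.range m := Finset.mem_range.mpr (by omega)
    rw [Finset.prod_eq_zero this (by ring), mul_zero]
  intro i
  induction i using Nat.strong_induction_on with
  | _ i IH =>
    intro hik
    have h1 : c i * ∏ j ∈ Finset.range i, (b i - b j) =
        f.eval (b i) - ∑ m ∈ Finset.range i, c m * ∏ j ∈ Finset.range m, (b i - b j) := by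
      rw [heval i hik, Finset.sum_range_succ]; ring
    rw [h1]
    refine dvd_sub (hdvd i hik) (Finset.dvd_sum fun m hm => ?_)
    simp only [Finset.mem_range] at hm
    have hIH := IH m hm (by omega)
    refine vp_key p hp e (c m) _ _ ?_ hIH
    rcases Nat.eq_zero_or_pos m with rfl | hm0
    · exact le_refl _
    · exact hb.2 m hm0 (b i) (hb.1 i)
end

section
/- Let S ⊆ ℤ, d a nonzero integer, k ≥ 0, and a_0, ..., a_k a d_k-ordering of S. For every polynomial f = g/d ∈ ℚ[x] of degree k with g ∈ ℤ[x], f maps all of S into ℤ if and only if f(a_i) ∈ ℤ for all 0 ≤ i ≤ k. -/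
open Polynomial Finset

/-! ### Auxiliary machinery -/

/-- The "falling factorial" basis polynomials attached to a sequence `u`. -/
noncomputable def Bp (u : ℕ → ℤ) (m : ℕ) : Polynomial ℤ :=
  ∏ i ∈ Finset.range m, (X - C (u i))

lemma Bp_eval (u : ℕ → ℤ) (m : ℕ) (z : ℤ) :
    (Bp u m).eval z = ∏ i ∈ Finset.range m, (z - u i) := by
  simp [Bp, eval_prod]

lemma Bp_monic (u : ℕ → ℤ) (m : ℕ) : (Bp u m).Monic :=
  monic_prod_of_monic _ _ fun i _ => monic_X_sub_C _

lemma Bp_natDegree (u : ℕ → ℤ) (m : ℕ) : (Bp u m).natDegree = m := by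
  rw [Bp, natDegree_prod _ _ fun i _ => X_sub_C_ne_zero _]
  simp only [natDegree_X_sub_C, Finset.sum_const, smul_eq_mul, mul_one, Finset.card_range]

lemma Bp_eval_self_zero (u : ℕ → ℤ) {m j : ℕ} (h : j < m) : (Bp u m).eval (u j) = 0 := by
  rw [Bp_eval]
  exact Finset.prod_eq_zero (Finset.mem_range.2 h) (sub_self _)

lemma pow_dvd_iff_le_vp {p : ℕ} (hp : p.Prime) {n : ℕ} {x : ℤ} :
    (p : ℤ) ^ n ∣ x ↔ (n : ℕ∞) ≤ vp p x := by
  haveI : Fact p.Prime := ⟨hp⟩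
  rw [vp]
  split_ifs with h
  · simp [h]
  · rw [padicValInt_dvd_iff]
    simp [h, Nat.cast_le]

/-- Expansion of a polynomial of degree ≤ k in the monic basis `Bp u i`, `i ≤ k`. -/
lemma exists_expansion (u : ℕ → ℤ) :
    ∀ (k : ℕ) (g : Polynomial ℤ), g.natDegree ≤ k →
      ∃ c : ℕ → ℤ, g = ∑ i ∈ Finset.range (k + 1), C (c i) * Bp u i := by
  intro k
  induction k with
  | zero =>
    intro g hg
    refine ⟨fun _ => g.coeff 0, ?_⟩
    rw [eq_C_of_natDegree_le_zero hg]
    simp [Bp]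
  | succ k IH =>
    intro g hg
    have hdegB : (Bp u (k + 1)).natDegree = k + 1 := Bp_natDegree u (k + 1)
    have hcoeffB : (Bp u (k + 1)).coeff (k + 1) = 1 := by
      have := (Bp_monic u (k + 1)).coeff_natDegree
      rwa [hdegB] at this
    set g1 := g - C (g.coeff (k + 1)) * Bp u (k + 1) with hg1
    have hdeg1 : g1.natDegree ≤ k := by
      rw [natDegree_le_iff_coeff_eq_zero]
      intro N hN
      rcases eq_or_lt_of_le (Nat.succ_le_of_lt hN) with hEq | hlt
      · rw [hg1, coeff_sub, coeff_C_mul, ← hEq, hcoeffB, mul_one, sub_self]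
      · have h1 : g.coeff N = 0 := coeff_eq_zero_of_natDegree_lt (lt_of_le_of_lt hg hlt)
        have h2 : (C (g.coeff (k + 1)) * Bp u (k + 1)).coeff N = 0 := by
          apply coeff_eq_zero_of_natDegree_lt
          exact lt_of_le_of_lt (le_trans (natDegree_C_mul_le _ _) hdegB.le) hlt
        rw [hg1, coeff_sub, h1, h2, sub_self]
    obtain ⟨c, hcX⟩ := IH g1 hdeg1
    refine ⟨fun i => if i = k + 1 then g.coeff (k + 1) else c i, ?_⟩
    rw [Finset.sum_range_succ]
    have hsum : (∑ i ∈ Finset.range (k + 1),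
        C (if i = k + 1 then g.coeff (k + 1) else c i) * Bp u i)
        = ∑ i ∈ Finset.range (k + 1), C (c i) * Bp u i := by
      refine Finset.sum_congr rfl fun i hi => ?_
      rw [if_neg (by have := Finset.mem_range.1 hi; omega)]
    rw [hsum, ← hcX]
    show g = g1 + C (if k + 1 = k + 1 then g.coeff (k + 1) else c (k + 1)) * Bp u (k + 1)
    rw [if_pos rfl, hg1]
    ring

/-- Core local lemma: if `p^v` divides `g` at all points of a `d_k`-type test set `y`
(congruent to a `p`-ordering `u` mod `p^(E k + 1)`), then `p^v` divides `g` on all of `S`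
and at every other such test set. -/
lemma core {p : ℕ} (hp : p.Prime) {S : Set ℤ} {u : ℕ → ℤ}
    (hu : IsPOrdering p S u) {E : ℕ → ℕ}
    (hE : ∀ m, (E m : ℕ∞) = vp p (∏ i ∈ Finset.range m, (u m - u i)))
    {k : ℕ} {y : ℕ → ℤ} (hy : ∀ m ≤ k, (p : ℤ) ^ (E k + 1) ∣ (y m - u m))
    {g : Polynomial ℤ} (hg : g.natDegree ≤ k)
    {v : ℕ} (hval : ∀ m ≤ k, (p : ℤ) ^ v ∣ g.eval (y m)) :
    (∀ s ∈ S, (p : ℤ) ^ v ∣ g.eval s) ∧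
    (∀ z : ℕ → ℤ, (∀ m ≤ k, (p : ℤ) ^ (E k + 1) ∣ (z m - u m)) →
      ∀ j ≤ k, (p : ℤ) ^ v ∣ g.eval (z j)) := by
  have hpZ : Prime (p : ℤ) := Nat.prime_iff_prime_int.mp hp
  have hpne : (p : ℤ) ≠ 0 := by exact_mod_cast hp.pos.ne'
  -- O1 : p^(E m) divides B_m at every point of S
  have hO1 : ∀ a ∈ S, ∀ m, (p : ℤ) ^ (E m) ∣ (Bp u m).eval a := by
    intro a haS m
    rcases Nat.eq_zero_or_pos m with rfl | hm
    · have h1 : (E 0 : ℕ∞) = vp p 1 := by simpa using hE 0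
      have h2 : vp p 1 = ((0 : ℕ) : ℕ∞) := by simp [vp, padicValInt]
      have h3 : E 0 = 0 := by
        rw [h2] at h1; exact_mod_cast h1
      simp [h3, Bp]
    · rw [pow_dvd_iff_le_vp hp, Bp_eval]
      calc (E m : ℕ∞) = vp p (∏ i ∈ Finset.range m, (u m - u i)) := hE m
        _ ≤ vp p (∏ i ∈ Finset.range m, (a - u i)) := hu.2 m hm a haS
  -- O2 : exactness at u m
  have hO2 : ∀ m, ¬ (p : ℤ) ^ (E m + 1) ∣ ∏ i ∈ Finset.range m, (u m - u i) := by
    intro m hdvd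
    rw [pow_dvd_iff_le_vp hp, ← hE m] at hdvd
    have : E m + 1 ≤ E m := by exact_mod_cast hdvd
    omega
  -- monotonicity of E
  have hmono : Monotone E := by
    apply monotone_nat_of_le_succ
    intro m
    by_contra h
    push_neg at h
    apply hO2 (m + 1)
    have h1 : (p : ℤ) ^ (E m) ∣ ∏ i ∈ Finset.range (m + 1), (u (m + 1) - u i) := by
      rw [Finset.prod_range_succ]
      exact Dvd.dvd.mul_right (by simpa [Bp_eval] using hO1 (u (m + 1)) (hu.1 (m + 1)) m) _
    exact dvd_trans (pow_dvd_pow _ (by omega)) h1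
  -- congruence for basis polynomials
  have hBcong : ∀ (z w : ℤ), (p : ℤ) ^ (E k + 1) ∣ z - w →
      ∀ m : ℕ, (p : ℤ) ^ (E k + 1) ∣ ((Bp u m).eval z - (Bp u m).eval w) :=
    fun z w h m => dvd_trans h (sub_dvd_eval_sub z w _)
  -- divisibility of basis values at congruent test points
  have hgood : ∀ (z : ℤ) (j : ℕ), (p : ℤ) ^ (E k + 1) ∣ (z - u j) →
      ∀ m ≤ k, (p : ℤ) ^ (E m) ∣ (Bp u m).eval z := by
    intro z j hz m hm
    have h1 : (p : ℤ) ^ (E m) ∣ (Bp u m).eval (u j) := hO1 (u j) (hu.1 j) m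
    have h2 : (p : ℤ) ^ (E m) ∣ ((Bp u m).eval z - (Bp u m).eval (u j)) :=
      dvd_trans (pow_dvd_pow _ (by have := hmono hm; omega)) (hBcong z (u j) hz m)
    simpa using dvd_add h2 h1
  -- exactness of basis values at test points y m
  have hyexact : ∀ m ≤ k, ∃ β : ℤ, (Bp u m).eval (y m) = (p : ℤ) ^ (E m) * β ∧
      ¬ (p : ℤ) ∣ β := by
    intro m hm
    obtain ⟨β, hβ⟩ := hgood (y m) m (hy m hm) m hm
    refine ⟨β, hβ, fun hpβ => ?_⟩
    have h1 : (p : ℤ) ^ (E m + 1) ∣ (Bp u m).eval (y m) := by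
      rw [hβ, pow_succ]
      exact mul_dvd_mul (dvd_refl _) hpβ
    have h2 : (p : ℤ) ^ (E m + 1) ∣ ((Bp u m).eval (y m) - (Bp u m).eval (u m)) :=
      dvd_trans (pow_dvd_pow _ (by have := hmono hm; omega)) (hBcong (y m) (u m) (hy m hm) m)
    have h3 : (p : ℤ) ^ (E m + 1) ∣ (Bp u m).eval (u m) := by
      have := dvd_sub h1 h2
      simpa using this
    rw [Bp_eval] at h3
    exact hO2 m h3
  -- expansion of g
  obtain ⟨c, hcX⟩ := exists_expansion u k g hg
  have hc : ∀ z : ℤ, g.eval z = ∑ i ∈ Finset.range (k + 1), c i * (Bp u i).eval z := by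
    intro z
    rw [hcX]
    simp [eval_finset_sum]
  -- the PASS lemma
  have hPASS : ∀ (w : ℕ), w ≤ E k + 1 → ∀ (c' : ℕ → ℤ),
      (∀ m ≤ k, (p : ℤ) ^ w ∣ ∑ i ∈ Finset.range (k + 1), c' i * (Bp u i).eval (y m)) →
      ∀ m, m ≤ k → (p : ℤ) ^ w ∣ c' m * (p : ℤ) ^ (E m) := by
    intro w hw c' hsum m
    induction m using Nat.strong_induction_on with
    | _ m IH =>
      intro hm
      have hterm : ∀ i ∈ Finset.range (k + 1), i ≠ m →
          (p : ℤ) ^ w ∣ c' i * (Bp u i).eval (y m) := by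
        intro i hi hin
        rcases lt_or_gt_of_ne hin with hlt | hgt
        · exact dvd_trans (IH i hlt (le_trans hlt.le hm))
            (mul_dvd_mul_left _ (hgood (y m) m (hy m hm) i (le_trans hlt.le hm)))
        · have h0 : (Bp u i).eval (u m) = 0 := Bp_eval_self_zero u hgt
          have h1 : (p : ℤ) ^ (E k + 1) ∣ (Bp u i).eval (y m) := by
            have := hBcong (y m) (u m) (hy m hm) i
            rwa [h0, sub_zero] at this
          exact dvd_mul_of_dvd_right (dvd_trans (pow_dvd_pow _ hw) h1) _
      have hiso : (p : ℤ) ^ w ∣ c' m * (Bp u m).eval (y m) := by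
        have hmem : m ∈ Finset.range (k + 1) := Finset.mem_range.2 (by omega)
        have hsplit := Finset.sum_erase_add (Finset.range (k + 1))
          (fun i => c' i * (Bp u i).eval (y m)) hmem
        have hdvd_erase : (p : ℤ) ^ w ∣
            ∑ i ∈ (Finset.range (k + 1)).erase m, c' i * (Bp u i).eval (y m) :=
          Finset.dvd_sum fun i hi =>
            hterm i (Finset.mem_of_mem_erase hi) (Finset.ne_of_mem_erase hi)
        have heq : c' m * (Bp u m).eval (y m)
            = (∑ i ∈ Finset.range (k + 1), c' i * (Bp u i).eval (y m))
              - ∑ i ∈ (Finset.range (k + 1)).erase m, c' i * (Bp u i).eval (y m) := by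
          rw [← hsplit]; ring
        rw [heq]
        exact dvd_sub (hsum m hm) hdvd_erase
      obtain ⟨β, hβ, hpβ⟩ := hyexact m hm
      rw [hβ, ← mul_assoc] at hiso
      have hcop : IsCoprime ((p : ℤ) ^ w) β :=
        IsCoprime.pow_left ((hpZ.coprime_iff_not_dvd).2 hpβ)
      exact hcop.dvd_of_dvd_mul_right hiso
  -- the MAIN lemma, by induction on v
  have hMAIN : ∀ (v' : ℕ) (c' : ℕ → ℤ),
      (∀ m ≤ k, (p : ℤ) ^ v' ∣ ∑ i ∈ Finset.range (k + 1), c' i * (Bp u i).eval (y m)) →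
      ∀ m ≤ k, (p : ℤ) ^ v' ∣ c' m * (p : ℤ) ^ (E m) := by
    intro v'
    induction v' with
    | zero => intro c' _ m hm; simpa using one_dvd _
    | succ v' IH =>
      intro c' hsum m hm
      by_cases hcase : v' + 1 ≤ E k + 1
      · exact hPASS (v' + 1) hcase c' hsum m hm
      · push_neg at hcase
        have hw : ∀ m' ≤ k, (p : ℤ) ^ (E k + 1) ∣ c' m' * (p : ℤ) ^ (E m') :=
          fun m' hm' => hPASS (E k + 1) le_rfl c'
            (fun m'' hm'' => dvd_trans (pow_dvd_pow _ (by omega)) (hsum m'' hm'')) m' hm'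
        have hpdvd : ∀ m' ≤ k, (p : ℤ) ∣ c' m' := by
          intro m' hm'
          have h1 : (p : ℤ) ^ (E m' + 1) ∣ c' m' * (p : ℤ) ^ (E m') :=
            dvd_trans (pow_dvd_pow _ (by have := hmono hm'; omega)) (hw m' hm')
          have h2 : (p : ℤ) * (p : ℤ) ^ (E m') ∣ c' m' * (p : ℤ) ^ (E m') := by
            rw [← pow_succ']
            exact h1
          exact (mul_dvd_mul_iff_right (pow_ne_zero (E m') hpne)).1 h2
        set c'' : ℕ → ℤ := fun i => c' i / p with hc''
        have hcc : ∀ i ≤ k, c' i = (p : ℤ) * c'' i := fun i hi =>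
          (Int.mul_ediv_cancel' (hpdvd i hi)).symm
        have hsum'' : ∀ m' ≤ k,
            (p : ℤ) ^ v' ∣ ∑ i ∈ Finset.range (k + 1), c'' i * (Bp u i).eval (y m') := by
          intro m' hm'
          have heq : (∑ i ∈ Finset.range (k + 1), c' i * (Bp u i).eval (y m'))
              = (p : ℤ) * ∑ i ∈ Finset.range (k + 1), c'' i * (Bp u i).eval (y m') := by
            rw [Finset.mul_sum]
            refine Finset.sum_congr rfl fun i hi => ?_
            rw [hcc i (by have := Finset.mem_range.1 hi; omega), mul_assoc]
          have h2 := hsum m' hm'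
          rw [heq, pow_succ'] at h2
          exact (mul_dvd_mul_iff_left hpne).1 h2
        have h3 := IH c'' hsum'' m hm
        rw [hcc m hm, pow_succ', mul_assoc]
        exact mul_dvd_mul_left _ h3
  -- conclusion
  have hc2 : ∀ m ≤ k, (p : ℤ) ^ v ∣ c m * (p : ℤ) ^ (E m) :=
    hMAIN v c (fun m hm => by rw [← hc (y m)]; exact hval m hm)
  have hOUT : ∀ z : ℤ, (∀ m ≤ k, (p : ℤ) ^ (E m) ∣ (Bp u m).eval z) →
      (p : ℤ) ^ v ∣ g.eval z := by
    intro z hz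
    rw [hc z]
    refine Finset.dvd_sum fun i hi => ?_
    have hik : i ≤ k := by have := Finset.mem_range.1 hi; omega
    exact dvd_trans (hc2 i hik) (mul_dvd_mul_left _ (hz i hik))
  constructor
  · intro s hs
    exact hOUT s (fun m _ => hO1 s hs m)
  · intro z hz j hj
    exact hOUT (z j) (fun m hm => hgood (z j) j (hz j hj) m hm)

/-- for a `d_k`-ordering `a` of `S` and `f = g/d` of degree `k`,
`f` maps `S` into `ℤ` iff `f(a i) ∈ ℤ` for all `0 ≤ i ≤ k`. -/
theorem stmt2 (S : Set ℤ) (d : ℤ) (hd : d ≠ 0) (k : ℕ)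
    (e : ℕ → ℕ → ℕ) (he : IsFactExp S e)
    (a : ℕ → ℤ) (ha : IsDkOrdering S d k e a)
    (g : Polynomial ℤ) (hdeg : g.natDegree = k)
    (f : Polynomial ℚ) (hf : f = (d : ℚ)⁻¹ • g.map (Int.castRingHom ℚ)) :
    IsIntValued S f ↔ ∀ i ≤ k, ∃ n : ℤ, f.eval ((a i : ℤ) : ℚ) = (n : ℚ) := by
  have hdQ : (d : ℚ) ≠ 0 := Int.cast_ne_zero.2 hd
  -- translation between integrality of f-values and divisibility of g-values
  have key : ∀ x : ℤ, ((∃ n : ℤ, f.eval (x : ℚ) = (n : ℚ)) ↔ d ∣ g.eval x) := by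
    intro x
    have hev : f.eval (x : ℚ) = (d : ℚ)⁻¹ * ((g.eval x : ℤ) : ℚ) := by
      rw [hf]
      simp [eval_smul, smul_eq_mul, eval_intCast_map]
    rw [hev]
    constructor
    · rintro ⟨n, hn⟩
      refine ⟨n, ?_⟩
      field_simp at hn
      exact_mod_cast hn
    · rintro ⟨n, hn⟩
      refine ⟨n, ?_⟩
      rw [hn]
      push_cast
      field_simp
  -- prime-power divisibility criterion in ℤ
  have hdvd_of : ∀ x : ℤ,
      (∀ (p t : ℕ), p.Prime → (p : ℤ) ^ t ∣ d → (p : ℤ) ^ t ∣ g.eval x) → d ∣ g.eval x := by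
    intro x h
    rw [← Int.natAbs_dvd_natAbs, Nat.dvd_iff_prime_pow_dvd_dvd]
    intro q t hq hqd
    have hq' : q.Prime := hq
    have h1 : (q : ℤ) ^ t ∣ d := by
      have h0 : ((q ^ t : ℕ) : ℤ) ∣ ((d.natAbs : ℕ) : ℤ) := Int.natCast_dvd_natCast.2 hqd
      have h0' : ((q ^ t : ℕ) : ℤ) ∣ d := h0.trans (Int.natAbs_dvd.2 dvd_rfl)
      exact_mod_cast h0'
    have h2 := h q t hq' h1
    exact Int.natCast_dvd.mp (by exact_mod_cast h2)
  -- the per-prime engine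
  have engine : ∀ (p t : ℕ), p.Prime → (p : ℤ) ^ t ∣ d → 0 < t →
      ∃ u : ℕ → ℤ, IsPOrdering p S u ∧ (∀ i ≤ k, (p : ℤ) ^ (e p k + 1) ∣ (a i - u i)) ∧
        (∀ m, ((e p m : ℕ) : ℕ∞) = vp p (∏ i ∈ Finset.range m, (u m - u i))) := by
    intro p t hp hptd ht
    have hpd : (p : ℤ) ∣ d := dvd_trans (dvd_pow_self _ (by omega)) hptd
    obtain ⟨u, hu, hcong⟩ := ha p hp hpd
    exact ⟨u, hu, hcong, he p hp u hu⟩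
  constructor
  · -- forward direction
    intro hint i hik
    rw [key]
    apply hdvd_of
    intro p t hp hptd
    rcases Nat.eq_zero_or_pos t with rfl | ht
    · simpa using one_dvd _
    obtain ⟨u, hu, hcong, hE⟩ := engine p t hp hptd ht
    have hval : ∀ m ≤ k, (p : ℤ) ^ t ∣ g.eval (u m) := fun m _ =>
      dvd_trans hptd ((key (u m)).1 (hint (u m) (hu.1 m)))
    have hcore := core hp hu hE (y := u) (fun m _ => by simp) (le_of_eq hdeg) hval
    exact hcore.2 a (fun m hm => hcong m hm) i hik
  · -- backward direction
    intro hvals s hs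
    rw [key]
    apply hdvd_of
    intro p t hp hptd
    rcases Nat.eq_zero_or_pos t with rfl | ht
    · simpa using one_dvd _
    obtain ⟨u, hu, hcong, hE⟩ := engine p t hp hptd ht
    have hval : ∀ m ≤ k, (p : ℤ) ^ t ∣ g.eval (a m) := fun m hm =>
      dvd_trans hptd ((key (a m)).1 (hvals m hm))
    have hcore := core hp hu hE (y := a) (fun m hm => hcong m hm) (le_of_eq hdeg) hval
    exact hcore.1 s hs
end

section
/- Let a_0, a_1, ..., a_k be a d_k-ordering of S ⊆ ℤ for integers d and k, and let p be a prime dividing d. Then for all 0 ≤ r ≤ k, the p-part of the fixed divisor d(S, F_r) equals the p-part of r!_S, where F_r(x) = (x - a_0)(x - a_1)···(x - a_{r-1}). -/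
open Polynomial Finset

lemma vp_dvd_iff (p : ℕ) (hp : p.Prime) (n : ℕ) (x : ℤ) :
    (p : ℤ) ^ n ∣ x ↔ (n : ℕ∞) ≤ vp p x := by
  haveI : Fact p.Prime := ⟨hp⟩
  unfold vp
  split_ifs with h
  · simp [h]
  · rw [Nat.cast_le, padicValInt_dvd_iff]
    simp [h]

lemma vp_le_vp_mul (p : ℕ) (hp : p.Prime) (x y : ℤ) : vp p x ≤ vp p (x * y) := by
  haveI : Fact p.Prime := ⟨hp⟩
  rcases eq_or_ne (x * y) 0 with h | h
  · simp [vp, h]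
  · have hx : x ≠ 0 := left_ne_zero_of_mul h
    have hy : y ≠ 0 := right_ne_zero_of_mul h
    simp only [vp, hx, h, if_neg, if_false]
    rw [padicValInt.mul hx hy]
    exact_mod_cast Nat.le_add_right _ _

lemma prod_sub_dvd (M : ℤ) (a u : ℕ → ℤ) (r : ℕ) (h : ∀ i < r, M ∣ (a i - u i)) (b : ℤ) :
    M ∣ (∏ i ∈ Finset.range r, (b - a i) - ∏ i ∈ Finset.range r, (b - u i)) := by
  induction r with
  | zero => simp
  | succ r ih =>
    have h1 := ih (fun i hi => h i (Nat.lt_succ_of_lt hi))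
    have h2 := h r (Nat.lt_succ_self r)
    rw [Finset.prod_range_succ, Finset.prod_range_succ]
    have key : (∏ i ∈ Finset.range r, (b - a i)) * (b - a r) -
        (∏ i ∈ Finset.range r, (b - u i)) * (b - u r) =
        ((∏ i ∈ Finset.range r, (b - a i)) - ∏ i ∈ Finset.range r, (b - u i)) * (b - a r) +
        (∏ i ∈ Finset.range r, (b - u i)) * (-(a r - u r)) := by ring
    rw [key]
    exact dvd_add (h1.mul_right _) ((h2.neg_right).mul_left _)

/-- for a `d_k`-ordering `a` of `S` and a prime `p ∣ d`, the `p`-part of the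
fixed divisor of `F_r = ∏_{i<r}(X - a_i)` over `S` equals the `p`-part of `r!_S`;
equivalently, `p^n` divides all values of `F_r` on `S` exactly when `n ≤ e p r`. -/
theorem stmt3 (S : Set ℤ) (d : ℤ) (k : ℕ)
    (e : ℕ → ℕ → ℕ) (he : IsFactExp S e)
    (a : ℕ → ℤ) (ha : IsDkOrdering S d k e a)
    (p : ℕ) (hp : p.Prime) (hpd : (p : ℤ) ∣ d) :
    ∀ r ≤ k, ∀ n : ℕ,
      ((∀ b ∈ S, (p : ℤ) ^ n ∣ ∏ i ∈ Finset.range r, (b - a i)) ↔ n ≤ e p r) := by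
  obtain ⟨u, hu, hcong⟩ := ha p hp hpd
  intro r hr n
  have hval : ∀ m, (e p m : ℕ∞) = vp p (∏ i ∈ Finset.range m, (u m - u i)) := he p hp u hu
  have he0 : e p 0 = 0 := by
    have h0 := hval 0
    simp only [Finset.range_zero, Finset.prod_empty, vp, one_ne_zero, if_false] at h0
    have h1 : padicValInt p 1 = 0 := by simp [padicValInt]
    rw [h1] at h0
    exact_mod_cast h0
  have hmono : ∀ m, e p m ≤ e p (m + 1) := by
    intro m
    rcases Nat.eq_zero_or_pos m with hm | hm
    · subst hm; simp [he0]
    · have h1 : (e p m : ℕ∞) ≤ vp p (∏ i ∈ Finset.range m, (u (m + 1) - u i)) := by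
        rw [hval m]; exact hu.2 m hm (u (m + 1)) (hu.1 (m + 1))
      have h2 : vp p (∏ i ∈ Finset.range m, (u (m + 1) - u i)) ≤ (e p (m + 1) : ℕ∞) := by
        rw [hval (m + 1), Finset.prod_range_succ]
        exact vp_le_vp_mul p hp _ _
      exact_mod_cast h1.trans h2
  have hrk : e p r ≤ e p k := (monotone_nat_of_le_succ hmono) hr
  have hdiff : ∀ b : ℤ, (p : ℤ) ^ (e p k + 1) ∣
      (∏ i ∈ Finset.range r, (b - a i) - ∏ i ∈ Finset.range r, (b - u i)) :=
    fun b => prod_sub_dvd _ _ _ _ (fun i hi => hcong i (hi.le.trans hr)) b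
  have hdvd_u : ∀ b ∈ S, (p : ℤ) ^ (e p r) ∣ ∏ i ∈ Finset.range r, (b - u i) := by
    intro b hb
    rcases Nat.eq_zero_or_pos r with h0 | h0
    · subst h0; simp [he0]
    · rw [vp_dvd_iff p hp]
      calc (e p r : ℕ∞) = vp p (∏ i ∈ Finset.range r, (u r - u i)) := hval r
        _ ≤ _ := hu.2 r h0 b hb
  have hnot : ¬ (p : ℤ) ^ (e p r + 1) ∣ ∏ i ∈ Finset.range r, (u r - u i) := by
    rw [vp_dvd_iff p hp, ← hval r]
    intro h
    have : e p r + 1 ≤ e p r := by exact_mod_cast h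
    omega
  constructor
  · intro h
    by_contra hn
    push_neg at hn
    have h1 : (p : ℤ) ^ (e p r + 1) ∣ ∏ i ∈ Finset.range r, (u r - a i) :=
      dvd_trans (pow_dvd_pow _ hn) (h (u r) (hu.1 r))
    have h2 : (p : ℤ) ^ (e p r + 1) ∣
        (∏ i ∈ Finset.range r, (u r - a i) - ∏ i ∈ Finset.range r, (u r - u i)) :=
      dvd_trans (pow_dvd_pow _ (by omega)) (hdiff (u r))
    have h3 := dvd_sub h1 h2
    rw [sub_sub_cancel] at h3
    exact hnot h3
  · intro hn b hb
    have h1 : (p : ℤ) ^ n ∣ ∏ i ∈ Finset.range r, (b - u i) :=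
      dvd_trans (pow_dvd_pow _ hn) (hdvd_u b hb)
    have h2 : (p : ℤ) ^ n ∣
        (∏ i ∈ Finset.range r, (b - a i) - ∏ i ∈ Finset.range r, (b - u i)) :=
      dvd_trans (pow_dvd_pow _ (by omega)) (hdiff b)
    have h3 := dvd_add h2 h1
    simpa using h3
end

section
/- Let a_0, ..., a_k be a d_k-ordering of S ⊆ ℤ, F_i(x) = (x-a_0)···(x-a_{i-1}), and f = (Σ_{i=0}^k b_i F_i(x))/d ∈ ℚ[x] with b_i, d ∈ ℤ, d ≠ 0. Then f ∈ Int(S,ℤ) if and only if for every prime p dividing d, v_p(d) ≤ v_p(b_i) + v_p(i!_S) for all 0 ≤ i ≤ k. -/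
open Polynomial Finset

lemma vp_le_iff {p : ℕ} (hp : p.Prime) (m : ℕ) (z : ℤ) :
    (m : ℕ∞) ≤ vp p z ↔ (p : ℤ) ^ m ∣ z := by
  haveI : Fact p.Prime := ⟨hp⟩
  unfold vp
  by_cases hz : z = 0
  · simp [hz]
  · rw [if_neg hz, padicValInt_dvd_iff]
    simp [hz, Nat.cast_le]

section PerPrime

variable {S : Set ℤ} {p : ℕ} (hp : p.Prime) {u : ℕ → ℤ} (hu : IsPOrdering p S u)
  {E : ℕ → ℕ} (hee : ∀ m, (E m : ℕ∞) = vp p (∏ i ∈ Finset.range m, (u m - u i)))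

include hp hu hee

lemma aux_e_zero : E 0 = 0 := by
  have h0 := hee 0
  simp only [Finset.range_zero, Finset.prod_empty] at h0
  have : vp p 1 = 0 := by simp [vp, padicValInt]
  rw [this] at h0
  exact_mod_cast h0

lemma aux_mono : Monotone E := by
  apply monotone_nat_of_le_succ
  intro m
  have : ((E m : ℕ∞) ≤ E (m + 1)) → E m ≤ E (m + 1) := by exact_mod_cast fun h => h
  apply this
  rw [hee (m + 1), vp_le_iff hp]
  rcases Nat.eq_zero_or_pos m with hm | hm
  · have h0 : E m = 0 := by rw [hm]; exact aux_e_zero hp hu hee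
    simp [h0]
  · have h1 : (p : ℤ) ^ E m ∣ ∏ i ∈ Finset.range m, (u (m + 1) - u i) := by
      rw [← vp_le_iff hp, hee m]
      exact hu.2 m hm (u (m + 1)) (hu.1 (m + 1))
    rw [Finset.prod_range_succ]
    exact h1.mul_right _

lemma aux_Sdvd : ∀ x ∈ S, ∀ m, (p : ℤ) ^ E m ∣ ∏ i ∈ Finset.range m, (x - u i) := by
  intro x hx m
  rcases Nat.eq_zero_or_pos m with hm | hm
  · have h0 : E m = 0 := by rw [hm]; exact aux_e_zero hp hu hee
    simp [h0]
  · rw [← vp_le_iff hp, hee m]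
    exact hu.2 m hm x hx

lemma aux_exact (l : ℕ) :
    ∃ t : ℤ, (∏ i ∈ Finset.range l, (u l - u i)) = (p : ℤ) ^ E l * t ∧ ¬ (p : ℤ) ∣ t := by
  have hdvd : (p : ℤ) ^ E l ∣ ∏ i ∈ Finset.range l, (u l - u i) :=
    (vp_le_iff hp _ _).mp (le_of_eq (hee l))
  obtain ⟨t, ht⟩ := hdvd
  refine ⟨t, ht, fun hpt => ?_⟩
  have hnd : ((E l + 1 : ℕ) : ℕ∞) ≤ vp p (∏ i ∈ Finset.range l, (u l - u i)) := by
    rw [vp_le_iff hp, ht, pow_succ]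
    exact mul_dvd_mul_left _ hpt
  rw [← hee l] at hnd
  have : E l + 1 ≤ E l := by exact_mod_cast hnd
  omega

end PerPrime

lemma aux_diff {p : ℕ} {k : ℕ} {a u : ℕ → ℤ} {N : ℕ}
    (hau : ∀ i ≤ k, (p : ℤ) ^ N ∣ (a i - u i)) :
    ∀ x : ℤ, ∀ i ≤ k,
      (p : ℤ) ^ N ∣ (∏ j ∈ Finset.range i, (x - a j)) - ∏ j ∈ Finset.range i, (x - u j) := by
  intro x i
  induction i with
  | zero => simp
  | succ i IH =>
    intro hik
    have hik' : i ≤ k := by omega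
    rw [Finset.prod_range_succ, Finset.prod_range_succ]
    have key : (∏ j ∈ Finset.range i, (x - a j)) * (x - a i) -
        (∏ j ∈ Finset.range i, (x - u j)) * (x - u i) =
        ((∏ j ∈ Finset.range i, (x - a j)) - ∏ j ∈ Finset.range i, (x - u j)) * (x - a i)
        + (∏ j ∈ Finset.range i, (x - u j)) * (-(a i - u i)) := by ring
    rw [key]
    exact dvd_add ((IH hik').mul_right _) (((hau i hik').neg_right).mul_left _)

lemma aux_PS {S : Set ℤ} {p : ℕ} (hp : p.Prime) {k : ℕ} {u : ℕ → ℤ}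
    (hu : IsPOrdering p S u) {E : ℕ → ℕ}
    (hee : ∀ m, (E m : ℕ∞) = vp p (∏ i ∈ Finset.range m, (u m - u i)))
    {a : ℕ → ℤ} (hau : ∀ i ≤ k, (p : ℤ) ^ (E k + 1) ∣ (a i - u i)) :
    ∀ x ∈ S, ∀ i ≤ k, (p : ℤ) ^ E i ∣ ∏ j ∈ Finset.range i, (x - a j) := by
  intro x hx i hik
  have h1 := aux_Sdvd hp hu hee x hx i
  have h2 := aux_diff hau x i hik
  have h3 : (p : ℤ) ^ E i ∣
      (∏ j ∈ Finset.range i, (x - a j)) - ∏ j ∈ Finset.range i, (x - u j) :=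
    (pow_dvd_pow _ (le_trans (aux_mono hp hu hee hik) (Nat.le_succ _))).trans h2
  have := dvd_add h3 h1
  simpa using this

lemma backward_prime {S : Set ℤ} {p : ℕ} (hp : p.Prime) {k : ℕ} {u : ℕ → ℤ}
    (hu : IsPOrdering p S u) {E : ℕ → ℕ}
    (hee : ∀ m, (E m : ℕ∞) = vp p (∏ i ∈ Finset.range m, (u m - u i)))
    {a : ℕ → ℤ} (hau : ∀ i ≤ k, (p : ℤ) ^ (E k + 1) ∣ (a i - u i))
    {b : ℕ → ℤ} {v : ℕ} (hbi : ∀ i ≤ k, (p : ℤ) ^ v ∣ b i * (p : ℤ) ^ E i)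
    (x : ℤ) (hx : x ∈ S) :
    (p : ℤ) ^ v ∣ ∑ i ∈ Finset.range (k + 1), b i * ∏ j ∈ Finset.range i, (x - a j) := by
  apply Finset.dvd_sum
  intro i hi
  have hik : i ≤ k := by have := Finset.mem_range.mp hi; omega
  obtain ⟨t, ht⟩ := aux_PS hp hu hee hau x hx i hik
  rw [ht, show b i * ((p : ℤ) ^ E i * t) = b i * (p : ℤ) ^ E i * t by ring]
  exact (hbi i hik).mul_right t

lemma forward_prime {S : Set ℤ} {p : ℕ} (hp : p.Prime) {k : ℕ} {u : ℕ → ℤ}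
    (hu : IsPOrdering p S u) {E : ℕ → ℕ}
    (hee : ∀ m, (E m : ℕ∞) = vp p (∏ i ∈ Finset.range m, (u m - u i)))
    {a : ℕ → ℤ} (hau : ∀ i ≤ k, (p : ℤ) ^ (E k + 1) ∣ (a i - u i))
    {b : ℕ → ℤ} {v : ℕ}
    (hval : ∀ l ≤ k, (p : ℤ) ^ v ∣
      ∑ i ∈ Finset.range (k + 1), b i * ∏ j ∈ Finset.range i, (u l - a j)) :
    ∀ i ≤ k, (p : ℤ) ^ v ∣ b i * (p : ℤ) ^ E i := by
  have hp0 : (p : ℤ) ≠ 0 := by exact_mod_cast hp.ne_zero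
  have hmono := aux_mono hp hu hee
  have main : ∀ r : ℕ, ∀ l ≤ k, (p : ℤ) ^ min v r ∣ b l * (p : ℤ) ^ E l := by
    intro r
    induction r with
    | zero => intro l _; simp
    | succ r IHr =>
      have cancel : ∀ (c z : ℤ) (i : ℕ), i ≤ k →
          (p : ℤ) ^ min v r ∣ c * (p : ℤ) ^ E i → (p : ℤ) ^ (E k + 1) ∣ z →
          (p : ℤ) ^ min v (r + 1) ∣ c * z := by
        intro c z i hik h1 h2
        have key : (p : ℤ) ^ (min v r + (E k + 1)) ∣ (c * (p : ℤ) ^ E i) * z := by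
          rw [pow_add]; exact mul_dvd_mul h1 h2
        have hle : E i + min v (r + 1) ≤ min v r + (E k + 1) := by
          have := hmono hik; omega
        have key2 : (p : ℤ) ^ E i * (p : ℤ) ^ min v (r + 1) ∣ (p : ℤ) ^ E i * (c * z) := by
          have h3 : (p : ℤ) ^ (E i + min v (r + 1)) ∣ (c * (p : ℤ) ^ E i) * z :=
            (pow_dvd_pow _ hle).trans key
          rw [pow_add] at h3
          rwa [show (c * (p : ℤ) ^ E i) * z = (p : ℤ) ^ E i * (c * z) by ring] at h3
        exact (mul_dvd_mul_iff_left (pow_ne_zero _ hp0)).mp key2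
      intro l
      induction l using Nat.strong_induction_on with
      | _ l IHl =>
        intro hl
        have hsum : (p : ℤ) ^ min v (r + 1) ∣
            ∑ i ∈ Finset.range (k + 1), b i * ∏ j ∈ Finset.range i, (u l - a j) :=
          (pow_dvd_pow _ (min_le_left _ _)).trans (hval l hl)
        have hother : ∀ i ∈ (Finset.range (k + 1)).erase l,
            (p : ℤ) ^ min v (r + 1) ∣ b i * ∏ j ∈ Finset.range i, (u l - a j) := by
          intro i hi
          have hik : i ≤ k := by
            have := Finset.mem_range.mp (Finset.mem_of_mem_erase hi); omega
          have hne : i ≠ l := Finset.ne_of_mem_erase hi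
          rcases lt_or_gt_of_ne hne with hlt | hgt
          · have hIH := IHl i hlt hik
            obtain ⟨t, ht⟩ := aux_PS hp hu hee hau (u l) (hu.1 l) i hik
            rw [ht, show b i * ((p : ℤ) ^ E i * t) = b i * (p : ℤ) ^ E i * t by ring]
            exact hIH.mul_right t
          · have hG0 : (∏ j ∈ Finset.range i, (u l - u j)) = 0 :=
              Finset.prod_eq_zero (Finset.mem_range.mpr hgt) (sub_self _)
            have hPN : (p : ℤ) ^ (E k + 1) ∣ ∏ j ∈ Finset.range i, (u l - a j) := by
              have := aux_diff hau (u l) i hik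
              rwa [hG0, sub_zero] at this
            exact cancel (b i) _ i hik (IHr i hik) hPN
        have hAl : (p : ℤ) ^ min v (r + 1) ∣ b l * ∏ j ∈ Finset.range l, (u l - a j) := by
          have hmem : l ∈ Finset.range (k + 1) := Finset.mem_range.mpr (by omega)
          have hsplit := Finset.add_sum_erase (Finset.range (k + 1))
            (fun i => b i * ∏ j ∈ Finset.range i, (u l - a j)) hmem
          have heq : b l * ∏ j ∈ Finset.range l, (u l - a j) =
              (∑ i ∈ Finset.range (k + 1), b i * ∏ j ∈ Finset.range i, (u l - a j)) -
              ∑ i ∈ (Finset.range (k + 1)).erase l,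
                b i * ∏ j ∈ Finset.range i, (u l - a j) := by
            rw [← hsplit]; ring
          rw [heq]
          exact dvd_sub hsum (Finset.dvd_sum hother)
        have hdl : (p : ℤ) ^ min v (r + 1) ∣
            b l * ((∏ j ∈ Finset.range l, (u l - a j)) - ∏ j ∈ Finset.range l, (u l - u j)) :=
          cancel (b l) _ l hl (IHr l hl) (aux_diff hau (u l) l hl)
        have hbG : (p : ℤ) ^ min v (r + 1) ∣ b l * ∏ j ∈ Finset.range l, (u l - u j) := by
          have heq : b l * ∏ j ∈ Finset.range l, (u l - u j) =
              (b l * ∏ j ∈ Finset.range l, (u l - a j)) -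
              b l * ((∏ j ∈ Finset.range l, (u l - a j)) -
                ∏ j ∈ Finset.range l, (u l - u j)) := by ring
          rw [heq]
          exact dvd_sub hAl hdl
        obtain ⟨t, ht, hpt⟩ := aux_exact hp hu hee l
        rw [ht, show b l * ((p : ℤ) ^ E l * t) = (b l * (p : ℤ) ^ E l) * t by ring] at hbG
        have hcop : IsCoprime ((p : ℤ) ^ min v (r + 1)) t :=
          ((Nat.prime_iff_prime_int.mp hp).coprime_iff_not_dvd.mpr hpt).pow_left
        exact hcop.dvd_of_dvd_mul_right hbG
  intro i hik
  have := main v i hik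
  rwa [min_self] at this

lemma dvd_of_prime_pow_dvd {d z : ℤ} (hd : d ≠ 0)
    (h : ∀ p : ℕ, p.Prime → (p : ℤ) ∣ d → (p : ℤ) ^ padicValInt p d ∣ z) :
    d ∣ z := by
  by_cases hz : z = 0
  · simp [hz]
  rw [← Int.natAbs_dvd_natAbs,
    ← Nat.factorization_le_iff_dvd (Int.natAbs_ne_zero.mpr hd) (Int.natAbs_ne_zero.mpr hz)]
  intro p
  by_cases hp : p.Prime
  · by_cases hpd : p ∣ d.natAbs
    · have hpd' : (p : ℤ) ∣ d := Int.dvd_natAbs.mp (Int.natCast_dvd_natCast.mpr hpd)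
      have h2 : p ^ padicValInt p d ∣ z.natAbs := by
        have := Int.natAbs_dvd_natAbs.mpr (h p hp hpd')
        simpa [Int.natAbs_pow] using this
      have h3 : d.natAbs.factorization p = padicValInt p d := by
        rw [Nat.factorization_def _ hp]; rfl
      rw [h3]
      exact (Nat.Prime.pow_dvd_iff_le_factorization hp (Int.natAbs_ne_zero.mpr hz)).mp h2
    · simp [Nat.factorization_eq_zero_of_not_dvd hpd]
  · simp [Nat.factorization_eq_zero_of_not_prime _ hp]

/-- `f = (Σ_{i≤k} b_i F_i)/d ∈ Int(S,ℤ)` iff for every prime `p ∣ d`,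
`v_p(d) ≤ v_p(b_i · i!_S) = v_p(b_i) + e p i` for all `0 ≤ i ≤ k` (the divisibility
`p^{v_p(d)} ∣ b_i · p^{e p i}` expresses this, covering `b_i = 0`). -/
theorem stmt5 (S : Set ℤ) (d : ℤ) (hd : d ≠ 0) (k : ℕ)
    (e : ℕ → ℕ → ℕ) (he : IsFactExp S e)
    (a : ℕ → ℤ) (ha : IsDkOrdering S d k e a)
    (b : ℕ → ℤ) (g : Polynomial ℤ)
    (hg : g = ∑ i ∈ Finset.range (k + 1),
      Polynomial.C (b i) * ∏ j ∈ Finset.range i, (Polynomial.X - Polynomial.C (a j)))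
    (f : Polynomial ℚ) (hf : f = (d : ℚ)⁻¹ • g.map (Int.castRingHom ℚ)) :
    IsIntValued S f ↔
      ∀ p : ℕ, p.Prime → (p : ℤ) ∣ d → ∀ i ≤ k,
        (p : ℤ) ^ padicValInt p d ∣ b i * (p : ℤ) ^ e p i := by
  have hgev : ∀ x : ℤ, g.eval x =
      ∑ i ∈ Finset.range (k + 1), b i * ∏ j ∈ Finset.range i, (x - a j) := by
    intro x
    rw [hg]
    simp [eval_finset_sum, eval_prod]
  have hfe : ∀ x : ℤ, f.eval (x : ℚ) = (d : ℚ)⁻¹ * ((g.eval x : ℤ) : ℚ) := by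
    intro x
    rw [hf, eval_smul, eval_intCast_map, smul_eq_mul]
    rfl
  have hiv : IsIntValued S f ↔ ∀ x ∈ S, d ∣ g.eval x := by
    unfold IsIntValued
    apply forall₂_congr
    intro x hx
    rw [hfe x]
    constructor
    · rintro ⟨n, hn⟩
      refine ⟨n, ?_⟩
      have hdQ : (d : ℚ) ≠ 0 := Int.cast_ne_zero.mpr hd
      field_simp at hn
      have : g.eval x = d * n := by exact_mod_cast hn
      rw [this]
    · rintro ⟨n, hn⟩
      refine ⟨n, ?_⟩
      rw [hn]
      push_cast
      have hdQ : (d : ℚ) ≠ 0 := Int.cast_ne_zero.mpr hd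
      field_simp
  rw [hiv]
  constructor
  · intro hIV p hp hpd i hik
    obtain ⟨u, hu, hau⟩ := ha p hp hpd
    have hval : ∀ l ≤ k, (p : ℤ) ^ padicValInt p d ∣
        ∑ i ∈ Finset.range (k + 1), b i * ∏ j ∈ Finset.range i, (u l - a j) := by
      intro l hl
      rw [← hgev]
      haveI : Fact p.Prime := ⟨hp⟩
      exact (padicValInt_dvd d).trans (hIV (u l) (hu.1 l))
    exact forward_prime hp hu (he p hp u hu) hau hval i hik
  · intro hcond x hx
    apply dvd_of_prime_pow_dvd hd
    intro p hp hpd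
    obtain ⟨u, hu, hau⟩ := ha p hp hpd
    rw [hgev]
    exact backward_prime hp hu (he p hp u hu) hau (hcond p hp hpd) x hx
end

section
/- The sequence a_i = i² (i = 0, 1, 2, ...) is a simultaneous p-ordering of the set S = {n² : n ∈ ℤ≥0} of squares; that is, for every prime p and every m ≥ 1, the element m² minimizes v_p(∏_{i<m}(x - i²)) over all x ∈ S. -/
open Polynomial Finset

lemma ascFactorial_eq_prod (n : ℕ) : ∀ k, n.ascFactorial k = ∏ i ∈ range k, (n + i)
  | 0 => rfl
  | k + 1 => by rw [Nat.ascFactorial_succ, prod_range_succ, ascFactorial_eq_prod n k, mul_comm]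

lemma key_nat (m n : ℕ) (h : m ≤ n) (hm : 0 < m) :
    2 * (n.descFactorial m * n.ascFactorial m) =
      (2 * m).factorial * (Nat.choose (n + m) (2 * m) + Nat.choose (n + m - 1) (2 * m)) := by
  obtain ⟨t, rfl⟩ := Nat.exists_eq_add_of_le h
  obtain ⟨s, rfl⟩ := Nat.exists_eq_add_of_le hm
  have hA := Nat.factorial_mul_descFactorial (show 1 + s ≤ 1 + s + t by omega)
  rw [show (1 + s + t) - (1 + s) = t by omega] at hA
  have hB := Nat.factorial_mul_ascFactorial' (1 + s + t) (1 + s) (by omega)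
  rw [show (1 + s + t) - 1 = s + t by omega,
      show (1 + s + t) + (1 + s) - 1 = 1 + 2*s + t by omega] at hB
  have hC := Nat.choose_mul_factorial_mul_factorial
      (show 2 * (1 + s) ≤ (1 + s + t) + (1 + s) by omega)
  rw [show (1 + s + t) + (1 + s) - 2 * (1 + s) = t by omega] at hC
  have hD : Nat.choose ((1 + s + t) + (1 + s) - 1) (2 * (1 + s)) * (2 * (1 + s)).factorial
      * t.factorial = t * (1 + 2*s + t).factorial := by
    rcases t with _ | t'
    · rw [Nat.choose_eq_zero_of_lt (by omega)]; simp
    · have := Nat.choose_mul_factorial_mul_factorial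
        (show 2 * (1 + s) ≤ (1 + s + (t'+1)) + (1 + s) - 1 by omega)
      rw [show (1 + s + (t'+1)) + (1 + s) - 1 - 2 * (1 + s) = t' by omega] at this
      rw [show (t'+1).factorial = (t'+1) * t'.factorial from rfl,
          show (1 + 2*s + (t'+1)).factorial = ((1 + s + (t'+1)) + (1 + s) - 1).factorial
            by congr 1; omega]
      calc Nat.choose ((1 + s + (t'+1)) + (1 + s) - 1) (2 * (1 + s)) * (2 * (1 + s)).factorial
            * ((t'+1) * t'.factorial)
          = (t'+1) * (Nat.choose ((1 + s + (t'+1)) + (1 + s) - 1) (2 * (1 + s))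
              * (2 * (1 + s)).factorial * t'.factorial) := by ring
        _ = (t'+1) * ((1 + s + (t'+1)) + (1 + s) - 1).factorial := by rw [this]
  have hE : ((1 + s + t) + (1 + s)).factorial = (2 + 2*s + t) * (1 + 2*s + t).factorial := by
    rw [show (1 + s + t) + (1 + s) = (1 + 2*s + t) + 1 by omega, Nat.factorial_succ]
    congr 1; omega
  have hF : (1 + s + t).factorial = (1 + s + t) * (s + t).factorial := by
    rw [show 1 + s + t = (s + t) + 1 by omega, Nat.factorial_succ]
  apply Nat.eq_of_mul_eq_mul_right (Nat.mul_pos t.factorial_pos (s + t).factorial_pos)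
  zify at hA hB hC hD hE hF ⊢
  linear_combination (2 * ((1+s+t).ascFactorial (1+s) : ℤ) * ((s+t).factorial : ℤ)) * hA
    + (2 * ((1+s+t).factorial : ℤ)) * hB
    + (2 * ((1 + 2*s + t).factorial : ℤ)) * hF
    - ((s+t).factorial : ℤ) * hC
    - ((s+t).factorial : ℤ) * hE
    - ((s+t).factorial : ℤ) * hD

lemma prod_sq_cast (m n : ℕ) (h : m ≤ n) :
    ∏ i ∈ range m, ((n : ℤ) ^ 2 - (i : ℤ) ^ 2)
      = ((n.descFactorial m * n.ascFactorial m : ℕ) : ℤ) := by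
  have h1 : ∀ i ∈ range m, (n : ℤ) ^ 2 - (i : ℤ) ^ 2 = (((n - i) * (n + i) : ℕ) : ℤ) := by
    intro i hi
    have hin : i ≤ n := le_trans (le_of_lt (mem_range.mp hi)) h
    push_cast [hin]
    ring
  rw [prod_congr rfl h1, ← Nat.cast_prod]
  congr 1
  rw [prod_mul_distrib, ← Nat.descFactorial_eq_prod_range, ← ascFactorial_eq_prod]

lemma vp_mono (p : ℕ) (hp : p.Prime) {x y : ℤ} (hx : x ≠ 0) (h : x ∣ y) :
    vp p x ≤ vp p y := by
  haveI : Fact p.Prime := ⟨hp⟩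
  by_cases hy : y = 0
  · simp [vp, hy]
  · rw [vp, vp, if_neg hx, if_neg hy]
    have h1 : (p : ℤ) ^ padicValInt p x ∣ y := dvd_trans (padicValInt_dvd x) h
    rcases (padicValInt_dvd_iff _ _).mp h1 with h2 | h2
    · exact absurd h2 hy
    · exact_mod_cast h2

lemma main_dvd (m n : ℕ) (hm : 0 < m) (hn : m ≤ n) :
    (∏ i ∈ range m, ((m : ℤ) ^ 2 - (i : ℤ) ^ 2))
      ∣ (∏ i ∈ range m, ((n : ℤ) ^ 2 - (i : ℤ) ^ 2)) := by
  have h1 := key_nat m m le_rfl hm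
  have h2 := key_nat m n hn hm
  rw [show m + m = 2 * m by ring, Nat.choose_self,
      Nat.choose_eq_zero_of_lt (show 2 * m - 1 < 2 * m by omega)] at h1
  set c := Nat.choose (n + m) (2 * m) + Nat.choose (n + m - 1) (2 * m) with hc
  have hNat : 2 * (n.descFactorial m * n.ascFactorial m)
      = 2 * ((m.descFactorial m * m.ascFactorial m) * c) := by
    rw [h2]
    rw [Nat.mul_one] at h1
    rw [← h1]
    ring
  refine ⟨(c : ℤ), mul_left_cancel₀ (two_ne_zero) ?_⟩
  rw [prod_sq_cast m m le_rfl, prod_sq_cast m n hn]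
  exact_mod_cast hNat

lemma prod_ne (m : ℕ) : ∏ i ∈ range m, ((m : ℤ) ^ 2 - (i : ℤ) ^ 2) ≠ 0 := by
  rw [Finset.prod_ne_zero_iff]
  intro i hi
  have hlt : (i : ℤ) < m := by exact_mod_cast mem_range.mp hi
  exact sub_ne_zero.mpr (ne_of_gt (pow_lt_pow_left₀ hlt (by positivity) two_ne_zero))

/-- the sequence `0², 1², 2², …` is a simultaneous `p`-ordering of the
set of squares `S = {n² : n ∈ ℤ≥0}`. -/
theorem stmt13 (S : Set ℤ) (hS : S = {x : ℤ | ∃ n : ℕ, x = (n : ℤ) ^ 2}) :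
    ∀ p : ℕ, p.Prime → IsPOrdering p S (fun i => (i : ℤ) ^ 2) := by
  intro p hp
  constructor
  · intro i
    rw [hS]
    exact ⟨i, rfl⟩
  · intro m hm a ha
    rw [hS] at ha
    obtain ⟨n, rfl⟩ := ha
    simp only []
    by_cases hn : m ≤ n
    · exact vp_mono p hp (prod_ne m) (main_dvd m n hm hn)
    · have h0 : ∏ i ∈ Finset.range m, ((n : ℤ) ^ 2 - (i : ℤ) ^ 2) = 0 :=
        Finset.prod_eq_zero (Finset.mem_range.mpr (lt_of_not_ge hn)) (by ring)
      rw [h0]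
      simp [vp]
end
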